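/- Every matching achievable as the men-optimal stable matching of a profile where a coalition L of women report arbitrary (possibly incomplete, reordered) preference lists, and which is stable with respect to the true profile, is also achievable as the men-optimal stable matching of some profile where each woman in L reports a truncation (prefix) of her true list. -/

import Mathlib

open List

/-- A stable-matching instance: each agent has a strict preference order
(a duplicate-free list, earlier = more preferred) over a subset of the other side. -/
structure SMInstance (M W : Type*) where
  mpref : M → List W
  wpref : W → List M
  mnodup : ∀ m, (mpref m).Nodup
  wnodup : ∀ w, (wpref w).Nodup

/-- A matching: a pairing of men and women (agents may be unmatched),
involutive on matched pairs. -/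
structure Matching (M W : Type*) where
  μm : M → Option W
  μw : W → Option M
  consistent : ∀ m w, μm m = some w ↔ μw w = some m

section Defs

variable {M W : Type*} [DecidableEq M] [DecidableEq W]

/-- Man `m` strictly prefers woman `w` to the (possibly empty) assignment `o`. -/
def SMInstance.mPref (I : SMInstance M W) (m : M) (w : W) : Option W → Prop
  | some w' => w ∈ I.mpref m ∧ (w' ∉ I.mpref m ∨ (I.mpref m).idxOf w < (I.mpref m).idxOf w')
  | none => w ∈ I.mpref m

/-- Woman `w` strictly prefers man `m` to the (possibly empty) assignment `o`. -/
def SMInstance.wPref (I : SMInstance M W) (w : W) (m : M) : Option M → Prop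
  | some m' => m ∈ I.wpref w ∧ (m' ∉ I.wpref w ∨ (I.wpref w).idxOf m < (I.wpref w).idxOf m')
  | none => m ∈ I.wpref w

/-- Man `m` weakly prefers assignment `o₁` to assignment `o₂`. -/
def SMInstance.mWeak (I : SMInstance M W) (m : M) (o₁ o₂ : Option W) : Prop :=
  o₁ = o₂ ∨ ∃ w, o₁ = some w ∧ I.mPref m w o₂

/-- Woman `w` weakly prefers assignment `o₁` to assignment `o₂`. -/
def SMInstance.wWeak (I : SMInstance M W) (w : W) (o₁ o₂ : Option M) : Prop :=
  o₁ = o₂ ∨ ∃ m, o₁ = some m ∧ I.wPref w m o₂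

def IndivRational (I : SMInstance M W) (μ : Matching M W) : Prop :=
  ∀ m w, μ.μm m = some w → w ∈ I.mpref m ∧ m ∈ I.wpref w

def BlockingPair (I : SMInstance M W) (μ : Matching M W) (m : M) (w : W) : Prop :=
  μ.μm m ≠ some w ∧ I.mPref m w (μ.μm m) ∧ I.wPref w m (μ.μw w)

def IsStable (I : SMInstance M W) (μ : Matching M W) : Prop :=
  IndivRational I μ ∧ ∀ m w, ¬ BlockingPair I μ m w

/-- The men-optimal stable matching (= output of men-proposing Gale–Shapley). -/
def IsMenOptimal (I : SMInstance M W) (μ : Matching M W) : Prop :=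
  IsStable I μ ∧ ∀ μ', IsStable I μ' → ∀ m, I.mWeak m (μ.μm m) (μ'.μm m)

/-- The women-optimal stable matching. -/
def IsWomenOptimal (I : SMInstance M W) (μ : Matching M W) : Prop :=
  IsStable I μ ∧ ∀ μ', IsStable I μ' → ∀ w, I.wWeak w (μ.μw w) (μ'.μw w)

/-- `I'` arises from `I` by arbitrary misreports of the women in `L`
(all men and all women outside `L` are truthful). -/
def GeneralManip (I I' : SMInstance M W) (L : Set W) : Prop :=
  I'.mpref = I.mpref ∧ ∀ w ∉ L, I'.wpref w = I.wpref w

/-- `I'` arises from `I` by truncation (prefix) misreports of the women in `L`. -/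
def TruncManip (I I' : SMInstance M W) (L : Set W) : Prop :=
  GeneralManip I I' L ∧ ∀ w ∈ L, (I'.wpref w) <+: (I.wpref w)

/-- `I'` arises from `I` by permutation misreports of the women in `L`. -/
def PermManip (I I' : SMInstance M W) (L : Set W) : Prop :=
  GeneralManip I I' L ∧ ∀ w ∈ L, (I'.wpref w).Perm (I.wpref w)

/-- Woman `w` is strictly better off in `μ₁` than in `μ₂` (true preferences). -/
def wStrictBetter (I : SMInstance M W) (w : W) (μ₁ μ₂ : Matching M W) : Prop :=
  ∃ m, μ₁.μw w = some m ∧ I.wPref w m (μ₂.μw w)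

/-- The set `δ(w)` of suitors of `w` at matching `μ`: the men who prefer `w`
to their own partner in `μ`. -/
def suitorSet (I : SMInstance M W) (μ : Matching M W) (w : W) : Set M :=
  {m | I.mPref m w (μ.μm m)}

/-- The suitor graph of Kobayashi–Matsui, on vertices `M ⊕ W ⊕ {s}`. -/
inductive SuitorEdge (I : SMInstance M W) (L : Set W) (μ : Matching M W) :
    M ⊕ W ⊕ Unit → M ⊕ W ⊕ Unit → Prop
  | partner_wm (w : W) (m : M) : μ.μw w = some m →
      SuitorEdge I L μ (Sum.inr (Sum.inl w)) (Sum.inl m)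
  | partner_mw (w : W) (m : M) : μ.μw w = some m →
      SuitorEdge I L μ (Sum.inl m) (Sum.inr (Sum.inl w))
  | suitor_manip (w : W) (m : M) : w ∈ L → m ∈ suitorSet I μ w →
      SuitorEdge I L μ (Sum.inl m) (Sum.inr (Sum.inl w))
  | suitor_honest (w : W) (m : M) : w ∉ L → m ∈ suitorSet I μ w →
      (∀ m' ∈ suitorSet I μ w, m' ≠ m → (I.wpref w).idxOf m < (I.wpref w).idxOf m') →
      SuitorEdge I L μ (Sum.inl m) (Sum.inr (Sum.inl w))
  | fromSource (w : W) : suitorSet I μ w = ∅ →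
      SuitorEdge I L μ (Sum.inr (Sum.inr ())) (Sum.inr (Sum.inl w))

/-- Reachability in the suitor graph. -/
abbrev SReach (I : SMInstance M W) (L : Set W) (μ : Matching M W) :
    (M ⊕ W ⊕ Unit) → (M ⊕ W ⊕ Unit) → Prop :=
  Relation.ReflTransGen (SuitorEdge I L μ)

/-- A reduced table (shortlists) for instance `I`: sublists of the true lists,
with mutual membership, where each man is engaged to the head of his reduced list,
each woman to the last man of hers, and every removed man is worse for the woman
than her current partner. -/
structure ReducedTable (I : SMInstance M W) where
  rm : M → List W
  rw : W → List M
  rmSub : ∀ m, (rm m).Sublist (I.mpref m)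
  rwSub : ∀ w, (rw w).Sublist (I.wpref w)
  mem_iff : ∀ m w, w ∈ rm m ↔ m ∈ rw w
  engaged : ∀ m w, (rm m).head? = some w ↔ (rw w).getLast? = some m
  removed_worse : ∀ m w p, m ∈ I.wpref w → m ∉ rw w → (rw w).getLast? = some p →
      (I.wpref w).idxOf p < (I.wpref w).idxOf m

/-- A rotation: a cyclic sequence of (distinct) men `m₀,…,m_{r-1}`
together with their current partners `w₀,…,w_{r-1}`. -/
structure Rot (M W : Type*) where
  r : ℕ
  hr : 2 ≤ r
  ms : Fin r → M
  ws : Fin r → W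
  inj : Function.Injective ms

/-- Cyclic successor of an index of a rotation. -/
def Rot.nxt (R : Rot M W) (i : Fin R.r) : Fin R.r :=
  ⟨((i : ℕ) + 1) % R.r, Nat.mod_lt _ (by have := R.hr; omega)⟩

/-- The reduced list of woman `w` determined by the stable matching `μ`:
the men weakly preferred to her current partner. -/
def reducedListW (I : SMInstance M W) (μ : Matching M W) (w : W) : List M :=
  match μ.μw w with
  | some p => (I.wpref w).filter (fun m => decide ((I.wpref w).idxOf m ≤ (I.wpref w).idxOf p))
  | none => []

/-- The reduced list of man `m` determined by the stable matching `μ`. -/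
def reducedListM (I : SMInstance M W) (μ : Matching M W) (m : M) : List W :=
  (I.mpref m).filter (fun w => decide (m ∈ reducedListW I μ w))

/-- The rotation `R` is exposed in (the reduced table of) the matching `μ`:
`w_i` is first and `w_{i+1}` second on `m_i`'s reduced list. -/
def Exposed (I : SMInstance M W) (μ : Matching M W) (R : Rot M W) : Prop :=
  ∀ i, (reducedListM I μ (R.ms i)).head? = some (R.ws i) ∧
       (reducedListM I μ (R.ms i))[1]? = some (R.ws (R.nxt i))

/-- `μ'` is the matching obtained from `μ` by eliminating the rotation `R`:
each `m_i` is now matched with `w_{i+1}`, everyone else is unchanged. -/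
def ElimStep (R : Rot M W) (μ μ' : Matching M W) : Prop :=
  (∀ i, μ'.μm (R.ms i) = some (R.ws (R.nxt i))) ∧
  ∀ m, (∀ i, m ≠ R.ms i) → μ'.μm m = μ.μm m

/-- `ElimSeq I μ S μ'`: the matching `μ'` is obtained from `μ` by successively
eliminating the (exposed-at-the-time) rotations of the set `S`. -/
inductive ElimSeq (I : SMInstance M W) : Matching M W → Set (Rot M W) → Matching M W → Prop
  | refl (μ : Matching M W) : ElimSeq I μ ∅ μ
  | step {μ μ' μ'' : Matching M W} {R : Rot M W} {S : Set (Rot M W)} :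
      Exposed I μ R → ElimStep R μ μ' → ElimSeq I μ' S μ'' → ElimSeq I μ (insert R S) μ''

/-- The rotation `R` moves man `m` from woman `w` to woman `w'`. -/
def Moves (R : Rot M W) (m : M) (w w' : W) : Prop :=
  ∃ i, R.ms i = m ∧ R.ws i = w ∧ R.ws (R.nxt i) = w'

/-- `R₁` explicitly precedes `R₂`: they share a man `m` such that `R₁` moves `m`
to some woman `w` and `R₂` moves `m` away from `w`. -/
def ExplicitPrec (R₁ R₂ : Rot M W) : Prop :=
  ∃ m w w₁ w₂, Moves R₁ m w₁ w ∧ Moves R₂ m w w₂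

/-- The precedence relation `≺`: transitive closure of explicit precedence. -/
def Prec (R₁ R₂ : Rot M W) : Prop :=
  Relation.TransGen ExplicitPrec R₁ R₂

/-- `R` is a rotation of the instance `I`: it is exposed at some matching
obtained from the men-optimal matching by eliminating rotations. -/
def IsRotOf (I : SMInstance M W) (R : Rot M W) : Prop :=
  ∃ μ0 S μ', IsMenOptimal I μ0 ∧ ElimSeq I μ0 S μ' ∧ Exposed I μ' R

/-- A closed (downward-closed under `≺`) set of rotations of the instance `I`. -/
def IsClosedSet (I : SMInstance M W) (𝓡 : Set (Rot M W)) : Prop :=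
  (∀ R ∈ 𝓡, IsRotOf I R) ∧ ∀ R ∈ 𝓡, ∀ R', IsRotOf I R' → Prec R' R → R' ∈ 𝓡

/-- The closed set `𝓡` can be eliminated: the matching obtained by eliminating it
is stable w.r.t. the true profile and is the men-optimal stable matching of some
profile in which only the women of `L` misreport. -/
def CanEliminate (I : SMInstance M W) (L : Set W) (𝓡 : Set (Rot M W)) : Prop :=
  ∃ μ0 μ', IsMenOptimal I μ0 ∧ ElimSeq I μ0 𝓡 μ' ∧ IsStable I μ' ∧
    ∃ I', GeneralManip I I' L ∧ IsMenOptimal I' μ'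

/-- `R` is a maximal rotation of the set `𝓡`. -/
def MaxRot (𝓡 : Set (Rot M W)) (R : Rot M W) : Prop :=
  R ∈ 𝓡 ∧ ∀ R' ∈ 𝓡, ¬ Prec R R'

/-- Whether man `m` proposes to woman `w` in the men-proposing Gale–Shapley run
whose outcome is `μ` (he proposes to every woman he weakly prefers to his final partner). -/
def proposedToB (I : SMInstance M W) (μ : Matching M W) (m : M) (w : W) : Bool :=
  decide (w ∈ I.mpref m) &&
    (match μ.μm m with
     | none => true
     | some w' => decide ((I.mpref m).idxOf w ≤ (I.mpref m).idxOf w'))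

/-- The proposal list `Pro(w)`: all men who proposed to `w`, ordered as in her stated list. -/
def proposals (I : SMInstance M W) (μ : Matching M W) (w : W) : List M :=
  (I.wpref w).filter (fun m => proposedToB I μ m w)

/-- `μ` is feasible for the permutation-manipulation game of coalition `L`. -/
def FeasibleM (I : SMInstance M W) (L : Set W) (μ : Matching M W) : Prop :=
  IsStable I μ ∧ ∃ I', PermManip I I' L ∧ IsMenOptimal I' μ

/-- `μ` is Pareto-optimal among feasible matchings (for the women). -/
def ParetoOptimal (I : SMInstance M W) (L : Set W) (μ : Matching M W) : Prop :=
  FeasibleM I L μ ∧ ¬∃ μ', FeasibleM I L μ' ∧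
    (∀ w, I.wWeak w (μ'.μw w) (μ.μw w)) ∧ (∃ w, wStrictBetter I w μ' μ)

/-- The reported profile `I'` with induced matching `μ` is a super-strong Nash
equilibrium of the permutation-manipulation game under the feasibility assumption. -/
def SuperStrongNE (I : SMInstance M W) (L : Set W) (I' : SMInstance M W)
    (μ : Matching M W) : Prop :=
  PermManip I I' L ∧ IsMenOptimal I' μ ∧ IsStable I μ ∧
  ∀ (Ls : Set W), Ls ⊆ L → ∀ I'' μ'',
    PermManip I I'' L → (∀ w ∉ Ls, I''.wpref w = I'.wpref w) →
    IsMenOptimal I'' μ'' → IsStable I μ'' →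
    ¬((∀ l ∈ Ls, I.wWeak l (μ''.μw l) (μ.μw l)) ∧ ∃ l ∈ Ls, wStrictBetter I l μ'' μ)

end Defs

section AuxListLemmas

variable {α : Type*} [DecidableEq α]

lemma prefix_indexOf' {l₁ l₂ : List α} (h : l₁ <+: l₂) {a : α} (ha : a ∈ l₁) :
    l₂.idxOf a = l₁.idxOf a := by
  obtain ⟨t, rfl⟩ := h
  exact List.idxOf_append_of_mem ha

lemma indexOf_lt_of_mem_take' {l : List α} {k : ℕ} {a : α} (ha : a ∈ l.take k) :
    l.idxOf a < k := by
  have h1 := prefix_indexOf' (List.take_prefix k l) ha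
  have h2 : (l.take k).idxOf a < (l.take k).length :=
    List.idxOf_lt_length_iff.2 ha
  have h3 : (l.take k).length = min k l.length := List.length_take
  omega

lemma mem_take_of_indexOf_lt' {l : List α} {k : ℕ} {a : α} (ha : a ∈ l)
    (h : l.idxOf a < k) : a ∈ l.take k := by
  by_contra hn
  have h3 := List.idxOf_append_of_notMem hn (l₂ := l.drop k)
  rw [List.take_append_drop] at h3
  have h4 : (l.take k).length = min k l.length := List.length_take
  have h5 : l.idxOf a < l.length := List.idxOf_lt_length_iff.2 ha
  omega

end AuxListLemmas

section AuxPref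

variable {M W : Type*} [DecidableEq M] [DecidableEq W]

lemma mPref_irrefl (J : SMInstance M W) (m : M) (w : W) : ¬ J.mPref m w (some w) := by
  rintro ⟨h1, h2⟩
  rcases h2 with h | h
  · exact h h1
  · omega

lemma wPref_irrefl (J : SMInstance M W) (w : W) (m : M) : ¬ J.wPref w m (some m) := by
  rintro ⟨h1, h2⟩
  rcases h2 with h | h
  · exact h h1
  · omega

lemma mPref_trans (J : SMInstance M W) {m : M} {w w' : W} {o : Option W}
    (h1 : J.mPref m w (some w')) (h2 : J.mPref m w' o) : J.mPref m w o := by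
  cases o with
  | none => exact h1.1
  | some w'' =>
    obtain ⟨hw, h1'⟩ := h1
    obtain ⟨hw', h2'⟩ := h2
    refine ⟨hw, ?_⟩
    rcases h1' with h | h
    · exact absurd hw' h
    · rcases h2' with h' | h'
      · exact Or.inl h'
      · exact Or.inr (h.trans h')

lemma mPref_total (J : SMInstance M W) {m : M} {w₁ w₂ : W}
    (h1 : w₁ ∈ J.mpref m) (h2 : w₂ ∈ J.mpref m) (hne : w₁ ≠ w₂) :
    J.mPref m w₁ (some w₂) ∨ J.mPref m w₂ (some w₁) := by
  have hidx : (J.mpref m).idxOf w₁ ≠ (J.mpref m).idxOf w₂ :=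
    fun h => hne ((List.idxOf_inj h1).1 h)
  rcases Nat.lt_or_ge ((J.mpref m).idxOf w₁) ((J.mpref m).idxOf w₂) with h | h
  · exact Or.inl ⟨h1, Or.inr h⟩
  · exact Or.inr ⟨h2, Or.inr (by omega)⟩

lemma mPref_of_weak (J : SMInstance M W) {m : M} {w : W} {o₁ o₂ : Option W}
    (h1 : J.mPref m w o₁) (h2 : J.mWeak m o₁ o₂) : J.mPref m w o₂ := by
  rcases h2 with rfl | ⟨w', rfl, h⟩
  · exact h1
  · exact mPref_trans J h1 h

lemma mWeak_trans (J : SMInstance M W) {m : M} {o₁ o₂ o₃ : Option W}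
    (h1 : J.mWeak m o₁ o₂) (h2 : J.mWeak m o₂ o₃) : J.mWeak m o₁ o₃ := by
  rcases h1 with rfl | ⟨w, rfl, h⟩
  · exact h2
  · exact Or.inr ⟨w, rfl, mPref_of_weak J h h2⟩

lemma mPref_congr {J₁ J₂ : SMInstance M W} (h : J₁.mpref = J₂.mpref)
    {m : M} {w : W} {o : Option W} : J₁.mPref m w o ↔ J₂.mPref m w o := by
  cases o <;> simp [SMInstance.mPref, h]

lemma wPref_congr {J₁ J₂ : SMInstance M W} {w : W} (h : J₁.wpref w = J₂.wpref w)
    {m : M} {o : Option M} : J₁.wPref w m o ↔ J₂.wPref w m o := by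
  cases o <;> simp [SMInstance.wPref, h]

lemma mWeak_congr {J₁ J₂ : SMInstance M W} (h : J₁.mpref = J₂.mpref)
    {m : M} {o₁ o₂ : Option W} : J₁.mWeak m o₁ o₂ ↔ J₂.mWeak m o₁ o₂ := by
  unfold SMInstance.mWeak
  simp only [mPref_congr h]

/-- From stability: if `m` strictly prefers `w` and is acceptable to her but not her
partner, then `w` is matched to someone she strictly prefers to `m`. -/
lemma stable_push (J : SMInstance M W) {μ : Matching M W} (hs : IsStable J μ)
    {m : M} {w : W} (hm : J.mPref m w (μ.μm m)) (hmem : m ∈ J.wpref w)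
    (hne : μ.μm m ≠ some w) :
    ∃ p, μ.μw w = some p ∧ J.wPref w p (some m) := by
  have hnb := hs.2 m w
  cases hp : μ.μw w with
  | none =>
    exact absurd ⟨hne, hm, by rw [hp]; exact hmem⟩ hnb
  | some p =>
    have hpm : p ∈ J.wpref w := (hs.1 p w ((μ.consistent p w).2 hp)).2
    have hnw : ¬ J.wPref w m (some p) := fun hw => hnb ⟨hne, hm, by rw [hp]; exact hw⟩
    have hple : ¬ ((J.wpref w).idxOf m < (J.wpref w).idxOf p) := by
      intro hlt; exact hnw ⟨hmem, Or.inr hlt⟩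
    have hpne : p ≠ m := by
      rintro rfl
      exact hne ((μ.consistent p w).2 hp)
    have hidx : (J.wpref w).idxOf p ≠ (J.wpref w).idxOf m :=
      fun h => hpne ((List.idxOf_inj hpm).1 h)
    exact ⟨p, rfl, hpm, Or.inr (by omega)⟩

/-- Dual of `stable_push`. -/
lemma stable_push' (J : SMInstance M W) {μ : Matching M W} (hs : IsStable J μ)
    {m : M} {w : W} (hw : J.wPref w m (μ.μw w)) (hmem : w ∈ J.mpref m)
    (hne : μ.μw w ≠ some m) :
    ∃ q, μ.μm m = some q ∧ J.mPref m q (some w) := by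
  have hnb := hs.2 m w
  have hne' : μ.μm m ≠ some w := fun h => hne ((μ.consistent m w).1 h)
  cases hp : μ.μm m with
  | none =>
    exact absurd ⟨hne', by rw [hp]; exact hmem, hw⟩ hnb
  | some q =>
    have hqm : q ∈ J.mpref m := (hs.1 m q hp).1
    have hnm : ¬ J.mPref m w (some q) := fun hm => hnb ⟨hne', by rw [hp]; exact hm, hw⟩
    have hqle : ¬ ((J.mpref m).idxOf w < (J.mpref m).idxOf q) := by
      intro hlt; exact hnm ⟨hmem, Or.inr hlt⟩
    have hqne : q ≠ w := by
      rintro rfl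
      exact hne' hp
    have hidx : (J.mpref m).idxOf q ≠ (J.mpref m).idxOf w :=
      fun h => hqne ((List.idxOf_inj hqm).1 h)
    exact ⟨q, rfl, hqm, Or.inr (by omega)⟩

end AuxPref

section Lattice

variable {M W : Type*} [DecidableEq M] [DecidableEq W]

/-- Man `m` strictly prefers his `ν`-partner to his `μ`-partner. -/
def prefNu (J : SMInstance M W) (μ ν : Matching M W) (m : M) : Prop :=
  ∃ w, ν.μm m = some w ∧ J.mPref m w (μ.μm m)

/-- Woman `w` strictly prefers her `μ`-partner to her `ν`-partner. -/
def Wmu (J : SMInstance M W) (μ ν : Matching M W) (w : W) : Prop :=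
  ∃ m, μ.μw w = some m ∧ J.wPref w m (ν.μw w)

open Classical in
/-- Men side of the join of two stable matchings: each man takes the better partner. -/
noncomputable def lamM (J : SMInstance M W) (μ ν : Matching M W) (m : M) : Option W :=
  if prefNu J μ ν m then ν.μm m else μ.μm m

open Classical in
noncomputable def lamW (J : SMInstance M W) (μ ν : Matching M W) (w : W) : Option M :=
  if h : ∃ m, lamM J μ ν m = some w then some h.choose else none

lemma lamM_cases {J : SMInstance M W} {μ ν : Matching M W} {m : M} {w : W}
    (h : lamM J μ ν m = some w) :
    (ν.μm m = some w ∧ prefNu J μ ν m) ∨ (μ.μm m = some w ∧ ¬ prefNu J μ ν m) := by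
  by_cases hp : prefNu J μ ν m
  · left; simp only [lamM] at h; rw [if_pos hp] at h; exact ⟨h, hp⟩
  · right; simp only [lamM] at h; rw [if_neg hp] at h; exact ⟨h, hp⟩

lemma prefNu_to_Wmu {J : SMInstance M W} {μ ν : Matching M W}
    (hμ : IsStable J μ) (hν : IsStable J ν) {m : M} (h : prefNu J μ ν m) :
    ∃ w, ν.μm m = some w ∧ Wmu J μ ν w := by
  obtain ⟨w, hw, hp⟩ := h
  have hmem : m ∈ J.wpref w := (hν.1 _ _ hw).2
  have hne : μ.μm m ≠ some w := by
    intro h'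
    rw [h'] at hp
    exact mPref_irrefl J m w hp
  obtain ⟨p, hpw, hwp⟩ := stable_push J hμ hp hmem hne
  exact ⟨w, hw, p, hpw, by rw [(ν.consistent m w).1 hw]; exact hwp⟩

lemma Wmu_to_prefNu {J : SMInstance M W} {μ ν : Matching M W}
    (hμ : IsStable J μ) (hν : IsStable J ν) {w : W} (h : Wmu J μ ν w) :
    ∃ m, μ.μw w = some m ∧ prefNu J μ ν m := by
  obtain ⟨m, hm, hp⟩ := h
  have hmm : μ.μm m = some w := (μ.consistent m w).2 hm
  have hmem : w ∈ J.mpref m := (hμ.1 _ _ hmm).1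
  have hne : ν.μw w ≠ some m := by
    intro h'
    rw [h'] at hp
    exact wPref_irrefl J w m hp
  obtain ⟨q, hq, hqp⟩ := stable_push' J hν hp hmem hne
  exact ⟨m, hm, q, hq, by rw [hmm]; exact hqp⟩

lemma uniq_aux {J : SMInstance M W} {μ ν : Matching M W}
    (hμ : IsStable J μ) (hν : IsStable J ν) {m₁ m₂ : M} {w : W}
    (h1 : μ.μm m₁ = some w) (hn1 : ¬ prefNu J μ ν m₁)
    (h2 : ν.μm m₂ = some w) (hp2 : prefNu J μ ν m₂) : m₁ = m₂ := by
  by_contra hne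
  have hw1 : μ.μw w = some m₁ := (μ.consistent _ _).1 h1
  have hw2 : ν.μw w = some m₂ := (ν.consistent _ _).1 h2
  have hm2w : m₂ ∈ J.wpref w := (hν.1 _ _ h2).2
  have hwm1 : w ∈ J.mpref m₁ := (hμ.1 _ _ h1).1
  have hp2' : J.mPref m₂ w (μ.μm m₂) := by
    obtain ⟨w', hw', hp⟩ := hp2
    rw [h2] at hw'
    cases hw'
    exact hp
  have hne2 : μ.μm m₂ ≠ some w := by
    intro h
    have := (μ.consistent _ _).1 h
    rw [hw1] at this
    exact hne (Option.some.inj this)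
  obtain ⟨p, hpw, hwp⟩ := stable_push J hμ hp2' hm2w hne2
  rw [hw1] at hpw
  cases hpw
  have hνne : ν.μm m₁ ≠ some w := by
    intro h
    have := (ν.consistent _ _).1 h
    rw [hw2] at this
    exact hne (Option.some.inj this).symm
  have hmp1 : J.mPref m₁ w (ν.μm m₁) := by
    cases hq : ν.μm m₁ with
    | none => exact hwm1
    | some w₁ =>
      have hw₁ : w₁ ∈ J.mpref m₁ := (hν.1 _ _ hq).1
      have hne' : w ≠ w₁ := by
        rintro rfl
        exact hνne hq
      rcases mPref_total J hwm1 hw₁ hne' with h | h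
      · exact h
      · exact absurd ⟨w₁, hq, by rw [h1]; exact h⟩ hn1
  exact hν.2 m₁ w ⟨hνne, hmp1, by rw [hw2]; exact hwp⟩

lemma lam_uniq {J : SMInstance M W} {μ ν : Matching M W}
    (hμ : IsStable J μ) (hν : IsStable J ν) {m₁ m₂ : M} {w : W}
    (h1 : lamM J μ ν m₁ = some w) (h2 : lamM J μ ν m₂ = some w) : m₁ = m₂ := by
  rcases lamM_cases h1 with ⟨ha, hpa⟩ | ⟨ha, hpa⟩ <;>
    rcases lamM_cases h2 with ⟨hb, hpb⟩ | ⟨hb, hpb⟩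
  · have e1 := (ν.consistent _ _).1 ha
    have e2 := (ν.consistent _ _).1 hb
    rw [e1] at e2
    exact (Option.some.inj e2)
  · exact (uniq_aux hμ hν hb hpb ha hpa).symm
  · exact uniq_aux hμ hν ha hpa hb hpb
  · have e1 := (μ.consistent _ _).1 ha
    have e2 := (μ.consistent _ _).1 hb
    rw [e1] at e2
    exact (Option.some.inj e2)

lemma weak_of_not_prefNu {J : SMInstance M W} {μ ν : Matching M W}
    (hμ : IsStable J μ) (hν : IsStable J ν) {m : M} (h : ¬ prefNu J μ ν m) :
    J.mWeak m (μ.μm m) (ν.μm m) := by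
  cases hq : ν.μm m with
  | none =>
    cases hp : μ.μm m with
    | none => exact Or.inl rfl
    | some w => exact Or.inr ⟨w, rfl, (hμ.1 _ _ hp).1⟩
  | some w₁ =>
    have hw₁ : w₁ ∈ J.mpref m := (hν.1 _ _ hq).1
    cases hp : μ.μm m with
    | none => exact absurd ⟨w₁, hq, by rw [hp]; exact hw₁⟩ h
    | some w =>
      by_cases he : w = w₁
      · exact Or.inl (by rw [he])
      · have hw : w ∈ J.mpref m := (hμ.1 _ _ hp).1
        rcases mPref_total J hw hw₁ he with hh | hh
        · exact Or.inr ⟨w, rfl, hh⟩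
        · exact absurd ⟨w₁, hq, by rw [hp]; exact hh⟩ h

/-- The lattice join: given two stable matchings of `J`, there is a stable matching
that is men-wise the max of the two, and women-wise is `μ` except where the woman
strictly prefers her `μ`-partner (in which case it is her `ν`-partner). -/
lemma lattice_join {J : SMInstance M W} [Fintype M] [Fintype W] {μ ν : Matching M W}
    (hμ : IsStable J μ) (hν : IsStable J ν) :
    ∃ lm : Matching M W, IsStable J lm ∧
      (∀ m, J.mWeak m (lm.μm m) (μ.μm m) ∧ J.mWeak m (lm.μm m) (ν.μm m)) ∧
      (∀ w, lm.μw w = μ.μw w ∨ ∃ m₁ m₂, μ.μw w = some m₁ ∧ ν.μw w = some m₂ ∧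
        lm.μw w = some m₂ ∧ J.wPref w m₁ (some m₂)) := by
  classical
  have consist : ∀ m w, lamM J μ ν m = some w ↔ lamW J μ ν w = some m := by
    intro m w
    constructor
    · intro h
      have hex : ∃ m', lamM J μ ν m' = some w := ⟨m, h⟩
      unfold lamW
      rw [dif_pos hex]
      exact congrArg some (lam_uniq hμ hν hex.choose_spec h)
    · intro h
      unfold lamW at h
      split at h
      · next hex =>
        injection h with h'
        rw [← h']
        exact hex.choose_spec
      · cases h
  set lm : Matching M W := ⟨lamM J μ ν, lamW J μ ν, consist⟩ with hlmdef
  have hlm_m : ∀ m, lm.μm m = lamM J μ ν m := fun _ => rfl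
  have hmax : ∀ m, J.mWeak m (lm.μm m) (μ.μm m) ∧ J.mWeak m (lm.μm m) (ν.μm m) := by
    intro m
    rw [hlm_m]
    by_cases h : prefNu J μ ν m
    · simp only [lamM]
      rw [if_pos h]
      obtain ⟨w, hw, hp⟩ := h
      exact ⟨Or.inr ⟨w, hw, hp⟩, Or.inl rfl⟩
    · simp only [lamM]
      rw [if_neg h]
      exact ⟨Or.inl rfl, weak_of_not_prefNu hμ hν h⟩
  -- counting: bijection between men preferring ν and women preferring μ
  have keyC : ∀ w m₁, μ.μw w = some m₁ → prefNu J μ ν m₁ →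
      ∃ m₂, ν.μw w = some m₂ ∧ prefNu J μ ν m₂ := by
    have hf : ∀ a : {m : M // prefNu J μ ν m},
        ∃ b : {w : W // Wmu J μ ν w}, ν.μm a.1 = some b.1 := by
      intro a
      obtain ⟨w, hw, hW⟩ := prefNu_to_Wmu hμ hν a.2
      exact ⟨⟨w, hW⟩, hw⟩
    choose f hfspec using hf
    have hg : ∀ b : {w : W // Wmu J μ ν w},
        ∃ a : {m : M // prefNu J μ ν m}, μ.μw b.1 = some a.1 := by
      intro b
      obtain ⟨m, hm, hP⟩ := Wmu_to_prefNu hμ hν b.2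
      exact ⟨⟨m, hP⟩, hm⟩
    choose g hgspec using hg
    have hfinj : Function.Injective f := by
      intro a a' h
      have h1 := hfspec a
      have h2 := hfspec a'
      rw [h] at h1
      have e1 := (ν.consistent _ _).1 h1
      have e2 := (ν.consistent _ _).1 h2
      rw [e1] at e2
      exact Subtype.ext (Option.some.inj e2)
    have hginj : Function.Injective g := by
      intro b b' h
      have h1 := hgspec b
      have h2 := hgspec b'
      rw [h] at h1
      have e1 := (μ.consistent _ _).2 h1
      have e2 := (μ.consistent _ _).2 h2
      rw [e1] at e2
      exact Subtype.ext (Option.some.inj e2)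
    have hcard : Nat.card {m : M // prefNu J μ ν m} = Nat.card {w : W // Wmu J μ ν w} :=
      le_antisymm (Nat.card_le_card_of_injective f hfinj)
        (Nat.card_le_card_of_injective g hginj)
    have hfsurj : Function.Surjective f :=
      ((Nat.bijective_iff_injective_and_card f).2 ⟨hfinj, hcard⟩).2
    have hgsurj : Function.Surjective g :=
      ((Nat.bijective_iff_injective_and_card g).2 ⟨hginj, hcard.symm⟩).2
    intro w m₁ hw1 hp1
    obtain ⟨b, hb⟩ := hgsurj ⟨m₁, hp1⟩
    have hb1 : μ.μw b.1 = some m₁ := by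
      have := hgspec b
      rw [hb] at this
      exact this
    have hbw : b.1 = w := by
      have e1 := (μ.consistent m₁ b.1).2 hb1
      have e2 := (μ.consistent m₁ w).2 hw1
      rw [e1] at e2
      exact Option.some.inj e2
    obtain ⟨a₂, ha₂⟩ := hfsurj ⟨w, hbw ▸ b.2⟩
    have hν2 : ν.μm a₂.1 = some w := by
      have := hfspec a₂
      rw [ha₂] at this
      exact this
    exact ⟨a₂.1, (ν.consistent _ _).1 hν2, a₂.2⟩
  have hcw : ∀ w, lm.μw w = μ.μw w ∨ ∃ m₁ m₂, μ.μw w = some m₁ ∧ ν.μw w = some m₂ ∧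
      lm.μw w = some m₂ ∧ J.wPref w m₁ (some m₂) := by
    intro w
    cases hw : μ.μw w with
    | some m₁ =>
      by_cases hp : prefNu J μ ν m₁
      · obtain ⟨m₂, hw2, hp2⟩ := keyC w m₁ hw hp
        have hν2 : ν.μm m₂ = some w := (ν.consistent _ _).2 hw2
        have hl2 : lm.μm m₂ = some w := by
          rw [hlm_m]
          simp only [lamM]
          rw [if_pos hp2]
          exact hν2
        have hlw : lm.μw w = some m₂ := (lm.consistent _ _).1 hl2
        have hne12 : m₁ ≠ m₂ := by
          rintro rfl
          obtain ⟨w', hw', hpp⟩ := hp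
          rw [hν2] at hw'
          cases hw'
          rw [(μ.consistent _ _).2 hw] at hpp
          exact mPref_irrefl J _ _ hpp
        have hmp2 : J.mPref m₂ w (μ.μm m₂) := by
          obtain ⟨w', hw', hpp⟩ := hp2
          rw [hν2] at hw'
          cases hw'
          exact hpp
        have hmem2 : m₂ ∈ J.wpref w := (hν.1 _ _ hν2).2
        have hne2 : μ.μm m₂ ≠ some w := by
          intro h
          have := (μ.consistent _ _).1 h
          rw [hw] at this
          exact hne12 (Option.some.inj this)
        obtain ⟨p, hpw, hwp⟩ := stable_push J hμ hmp2 hmem2 hne2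
        rw [hw] at hpw
        cases hpw
        exact Or.inr ⟨m₁, m₂, rfl, hw2, hlw, hwp⟩
      · have hμm : μ.μm m₁ = some w := (μ.consistent _ _).2 hw
        have hl1 : lm.μm m₁ = some w := by
          rw [hlm_m]
          simp only [lamM]
          rw [if_neg hp]
          exact hμm
        exact Or.inl ((lm.consistent _ _).1 hl1)
    | none =>
      left
      cases hl : lm.μw w with
      | none => rfl
      | some m =>
        exfalso
        have hlm2 : lamM J μ ν m = some w := (lm.consistent _ _).2 hl
        rcases lamM_cases hlm2 with ⟨ha, hpa⟩ | ⟨ha, hpa⟩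
        · obtain ⟨w', hw', hW⟩ := prefNu_to_Wmu hμ hν hpa
          rw [ha] at hw'
          cases hw'
          obtain ⟨m', hm', _⟩ := hW
          rw [hw] at hm'
          cases hm'
        · have := (μ.consistent _ _).1 ha
          rw [hw] at this
          cases this
  have hstab : IsStable J lm := by
    constructor
    · intro m w h
      rcases lamM_cases (show lamM J μ ν m = some w from h) with ⟨ha, _⟩ | ⟨ha, _⟩
      · exact hν.1 _ _ ha
      · exact hμ.1 _ _ ha
    · rintro m w ⟨hne, hmp, hwp⟩
      rcases hcw w with hcc | ⟨m₁, m₂, hw1, hw2, hlw, _⟩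
      · have hmμ : J.mPref m w (μ.μm m) := mPref_of_weak J hmp (hmax m).1
        have hwμ : J.wPref w m (μ.μw w) := by rw [← hcc]; exact hwp
        have hneμ : μ.μm m ≠ some w := by
          intro h
          have h2 : lm.μw w = some m := by rw [hcc]; exact (μ.consistent _ _).1 h
          rw [h2] at hwp
          exact wPref_irrefl J _ _ hwp
        exact hμ.2 m w ⟨hneμ, hmμ, hwμ⟩
      · have hmν : J.mPref m w (ν.μm m) := mPref_of_weak J hmp (hmax m).2
        have hwν : J.wPref w m (ν.μw w) := by rw [hw2, ← hlw]; exact hwp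
        have hneν : ν.μm m ≠ some w := by
          intro h
          have h2 : lm.μw w = some m := by rw [hlw, ← hw2]; exact (ν.consistent _ _).1 h
          rw [h2] at hwp
          exact wPref_irrefl J _ _ hwp
        exact hν.2 m w ⟨hneν, hmν, hwν⟩
  exact ⟨lm, hstab, hmax, hcw⟩

end Lattice

section Trunc

variable {M W : Type*} [DecidableEq M] [DecidableEq W]

open Classical in
/-- Truncation instance: each woman of `L` truncates her true list right after her
`μ`-partner (empty list if unmatched). -/
noncomputable def truncI (I : SMInstance M W) (L : Set W) (μ : Matching M W) :
    SMInstance M W where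
  mpref := I.mpref
  wpref := fun w =>
    if w ∈ L then
      match μ.μw w with
      | some p => (I.wpref w).take ((I.wpref w).idxOf p + 1)
      | none => ([] : List M)
    else I.wpref w
  mnodup := I.mnodup
  wnodup := by
    intro w
    split
    · cases μ.μw w with
      | some p => exact List.Nodup.sublist (List.take_sublist _ _) (I.wnodup w)
      | none => exact List.nodup_nil
    · exact I.wnodup w

lemma truncI_mpref (I : SMInstance M W) (L : Set W) (μ : Matching M W) :
    (truncI I L μ).mpref = I.mpref := rfl

lemma truncI_wpref_not {I : SMInstance M W} {L : Set W} {μ : Matching M W} {w : W}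
    (hw : w ∉ L) : (truncI I L μ).wpref w = I.wpref w := by
  simp only [truncI]
  rw [if_neg hw]

lemma truncI_wpref_mem {I : SMInstance M W} {L : Set W} {μ : Matching M W} {w : W} {p : M}
    (hw : w ∈ L) (hp : μ.μw w = some p) :
    (truncI I L μ).wpref w = (I.wpref w).take ((I.wpref w).idxOf p + 1) := by
  simp only [truncI]
  rw [if_pos hw, hp]

lemma truncI_wpref_none {I : SMInstance M W} {L : Set W} {μ : Matching M W} {w : W}
    (hw : w ∈ L) (hp : μ.μw w = none) : (truncI I L μ).wpref w = [] := by
  simp only [truncI]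
  rw [if_pos hw, hp]

end Trunc

/-- every matching achievable by a feasible general manipulation of
the coalition L is achievable by a truncation manipulation of L. -/
theorem general_to_truncation {M W : Type*} [DecidableEq M] [DecidableEq W]
    [Fintype M] [Fintype W] (I I' : SMInstance M W) (L : Set W) (μ : Matching M W)
    (hG : GeneralManip I I' L) (hopt : IsMenOptimal I' μ) (hstab : IsStable I μ) :
    ∃ I'' : SMInstance M W, TruncManip I I'' L ∧ IsMenOptimal I'' μ := by
  classical
  have hmpr : (truncI I L μ).mpref = I.mpref := rfl
  have hmpr' : I'.mpref = I.mpref := hG.1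
  have hIR := hstab.1
  -- μ is stable with respect to the truncation instance
  have hμIR'' : IndivRational (truncI I L μ) μ := by
    intro m w h
    obtain ⟨h1, h2⟩ := hIR m w h
    refine ⟨h1, ?_⟩
    by_cases hw : w ∈ L
    · have hp : μ.μw w = some m := (μ.consistent m w).1 h
      rw [truncI_wpref_mem hw hp]
      exact mem_take_of_indexOf_lt' h2 (Nat.lt_succ_self _)
    · rw [truncI_wpref_not hw]
      exact h2
  have hμst'' : IsStable (truncI I L μ) μ := by
    refine ⟨hμIR'', ?_⟩
    rintro m w ⟨hne, hmp, hwp⟩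
    have hmpI : I.mPref m w (μ.μm m) := (mPref_congr hmpr).1 hmp
    by_cases hw : w ∈ L
    · cases hp : μ.μw w with
      | none =>
        rw [hp] at hwp
        have hmem : m ∈ (truncI I L μ).wpref w := hwp
        rw [truncI_wpref_none hw hp] at hmem
        exact absurd hmem List.not_mem_nil
      | some p =>
        rw [hp] at hwp
        obtain ⟨hm'', hcmp⟩ := hwp
        have hl'' := truncI_wpref_mem (I := I) hw hp
        have hpmem : p ∈ I.wpref w := (hIR p w ((μ.consistent p w).2 hp)).2
        have hp'' : p ∈ (truncI I L μ).wpref w := by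
          rw [hl'']
          exact mem_take_of_indexOf_lt' hpmem (Nat.lt_succ_self _)
        have hmI : m ∈ I.wpref w := by
          have h3 := hl'' ▸ hm''
          exact List.mem_of_mem_take h3
        have hlt'' : ((truncI I L μ).wpref w).idxOf m < ((truncI I L μ).wpref w).idxOf p := by
          rcases hcmp with h | h
          · exact absurd hp'' h
          · exact h
        have e1 : (I.wpref w).idxOf m = ((truncI I L μ).wpref w).idxOf m := by
          rw [hl'']
          exact prefix_indexOf' (List.take_prefix _ _) (hl'' ▸ hm'')
        have e2 : (I.wpref w).idxOf p = ((truncI I L μ).wpref w).idxOf p := by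
          rw [hl'']
          exact prefix_indexOf' (List.take_prefix _ _) (hl'' ▸ hp'')
        refine hstab.2 m w ⟨hne, hmpI, ?_⟩
        rw [hp]
        exact ⟨hmI, Or.inr (by omega)⟩
    · have hwp' : I.wPref w m (μ.μw w) := (wPref_congr (truncI_wpref_not hw)).1 hwp
      exact hstab.2 m w ⟨hne, hmpI, hwp'⟩
  refine ⟨truncI I L μ, ⟨⟨rfl, fun w hw => truncI_wpref_not hw⟩, fun w hw => ?_⟩,
    hμst'', fun ν hν m => ?_⟩
  · -- truncation is a prefix
    cases hp : μ.μw w with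
    | none => rw [truncI_wpref_none hw hp]; exact List.nil_prefix
    | some p => rw [truncI_wpref_mem hw hp]; exact List.take_prefix _ _
  · -- men-optimality
    obtain ⟨lm, hlmst, hmax, hcw⟩ := lattice_join hμst'' hν
    -- the join agrees with μ on the coalition L
    have hLag : ∀ w ∈ L, lm.μw w = μ.μw w := by
      intro w hw
      rcases hcw w with h | ⟨m₁, m₂, hw1, hw2, hlw, hwp⟩
      · exact h
      · exfalso
        have hl'' := truncI_wpref_mem (I := I) hw hw1
        have hm2mem : m₂ ∈ (truncI I L μ).wpref w := (hν.1 _ _ ((ν.consistent _ _).2 hw2)).2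
        obtain ⟨hm1'', hcmp⟩ := hwp
        have hlt : ((truncI I L μ).wpref w).idxOf m₁ < ((truncI I L μ).wpref w).idxOf m₂ := by
          rcases hcmp with h | h
          · exact absurd hm2mem h
          · exact h
        have e1 : (I.wpref w).idxOf m₁ = ((truncI I L μ).wpref w).idxOf m₁ := by
          rw [hl'']
          exact prefix_indexOf' (List.take_prefix _ _) (hl'' ▸ hm1'')
        have e2 : (I.wpref w).idxOf m₂ = ((truncI I L μ).wpref w).idxOf m₂ := by
          rw [hl'']
          exact prefix_indexOf' (List.take_prefix _ _) (hl'' ▸ hm2mem)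
        have hle : (I.wpref w).idxOf m₂ ≤ (I.wpref w).idxOf m₁ := by
          have h3 : m₂ ∈ (I.wpref w).take ((I.wpref w).idxOf m₁ + 1) := hl'' ▸ hm2mem
          have h4 := indexOf_lt_of_mem_take' h3
          omega
        omega
    -- the join is stable with respect to the reported profile I'
    have hlmIR' : IndivRational I' lm := by
      intro m' w h
      have h2 := hlmst.1 m' w h
      constructor
      · rw [hmpr']
        exact h2.1
      · by_cases hw : w ∈ L
        · have hμw : μ.μw w = some m' := by
            rw [← hLag w hw]
            exact (lm.consistent _ _).1 h
          exact (hopt.1.1 m' w ((μ.consistent _ _).2 hμw)).2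
        · rw [hG.2 w hw, ← truncI_wpref_not (μ := μ) hw]
          exact h2.2
    have hlmst' : IsStable I' lm := by
      refine ⟨hlmIR', ?_⟩
      rintro m' w ⟨hne, hmp, hwp⟩
      have hmp'' : (truncI I L μ).mPref m' w (lm.μm m') :=
        (mPref_congr (hmpr'.trans hmpr.symm)).1 hmp
      by_cases hw : w ∈ L
      · have hmpμ : (truncI I L μ).mPref m' w (μ.μm m') :=
          mPref_of_weak (truncI I L μ) hmp'' (hmax m').1
        have hmpμ' : I'.mPref m' w (μ.μm m') :=
          (mPref_congr (hmpr'.trans hmpr.symm)).2 hmpμ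
        have hwpμ : I'.wPref w m' (μ.μw w) := by
          rw [← hLag w hw]
          exact hwp
        have hneμ : μ.μm m' ≠ some w := by
          intro h
          have h3 : lm.μw w = some m' := by
            rw [hLag w hw]
            exact (μ.consistent _ _).1 h
          rw [h3] at hwp
          exact wPref_irrefl I' w m' hwp
        exact hopt.1.2 m' w ⟨hneμ, hmpμ', hwpμ⟩
      · have hwp'' : (truncI I L μ).wPref w m' (lm.μw w) :=
          (wPref_congr ((hG.2 w hw).trans (truncI_wpref_not (μ := μ) hw).symm)).1 hwp
        exact hlmst.2 m' w ⟨hne, hmp'', hwp''⟩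
    have h1 : I'.mWeak m (μ.μm m) (lm.μm m) := hopt.2 lm hlmst' m
    have h1'' : (truncI I L μ).mWeak m (μ.μm m) (lm.μm m) :=
      (mWeak_congr (hmpr'.trans hmpr.symm)).1 h1
    exact mWeak_trans (truncI I L μ) h1'' (hmax m).2
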